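/- Let θ ∈ (0, π/2), let u and v be unit vectors in the plane with u·v = cos(π - 2θ), and let r_a, r_b ∈ (0,1). The circle of radius r_a centered at (1-r_a)·u and the circle of radius r_b centered at (1-r_b)·v are externally tangent if and only if r_b = cos²θ*(1-r_a)/(cos²θ + r_a*sin²θ). -/
import Mathlib


open scoped RealInnerProductSpace

/-- **Tangency relation for horocycles in the four-subregion configuration.**
Let `θ ∈ (0, π/2)`, let `u`, `v` be unit vectors in the plane with
`⟪u, v⟫ = cos(π - 2θ)`, and let `r_a, r_b ∈ (0,1)`.  The circle of radius `r_a`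
centered at `(1-r_a)•u` and the circle of radius `r_b` centered at `(1-r_b)•v` are
externally tangent if and only if `r_b = cos²θ*(1-r_a)/(cos²θ + r_a*sin²θ)`. -/
theorem horocycles_tangent_four_subregions (θ : ℝ) (hθ : θ ∈ Set.Ioo 0 (Real.pi / 2))
    (u v : EuclideanSpace ℝ (Fin 2)) (hu : ‖u‖ = 1) (hv : ‖v‖ = 1)
    (huv : ⟪u, v⟫ = Real.cos (Real.pi - 2 * θ))
    (ra rb : ℝ) (hra : ra ∈ Set.Ioo (0 : ℝ) 1) (hrb : rb ∈ Set.Ioo (0 : ℝ) 1) :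
    dist ((1 - ra) • u) ((1 - rb) • v) = ra + rb ↔
      rb = Real.cos θ ^ 2 * (1 - ra) / (Real.cos θ ^ 2 + ra * Real.sin θ ^ 2) := by
  obtain ⟨hra0, hra1⟩ := hra
  obtain ⟨hrb0, hrb1⟩ := hrb
  have hc : 0 < Real.cos θ :=
    Real.cos_pos_of_mem_Ioo ⟨by linarith [hθ.1, Real.pi_pos], hθ.2⟩
  have hs : Real.sin θ ^ 2 + Real.cos θ ^ 2 = 1 := Real.sin_sq_add_cos_sq θ
  have hD : 0 < Real.cos θ ^ 2 + ra * Real.sin θ ^ 2 := by positivity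
  have hcos : Real.cos (Real.pi - 2 * θ) = 2 * Real.sin θ ^ 2 - 1 := by
    rw [Real.cos_pi_sub, Real.cos_two_mul]
    nlinarith [hs]
  have hsq : dist ((1 - ra) • u) ((1 - rb) • v) ^ 2 =
      (1 - ra) ^ 2 + (1 - rb) ^ 2 - 2 * (1 - ra) * (1 - rb) * (2 * Real.sin θ ^ 2 - 1) := by
    rw [dist_eq_norm, @norm_sub_sq_real, inner_smul_left, inner_smul_right, norm_smul,
      norm_smul, hu, hv, huv, hcos]
    simp only [RCLike.conj_to_real, Real.norm_eq_abs, abs_of_pos (by linarith : (0:ℝ) < 1 - ra),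
      abs_of_pos (by linarith : (0:ℝ) < 1 - rb)]
    ring
  constructor
  · intro h
    have h2 : (1 - ra) ^ 2 + (1 - rb) ^ 2 - 2 * (1 - ra) * (1 - rb) * (2 * Real.sin θ ^ 2 - 1)
        = (ra + rb) ^ 2 := by rw [← hsq, h]
    rw [eq_div_iff (ne_of_gt hD)]
    nlinarith [h2, hs]
  · intro h
    rw [eq_div_iff (ne_of_gt hD)] at h
    have h2 : dist ((1 - ra) • u) ((1 - rb) • v) ^ 2 = (ra + rb) ^ 2 := by
      rw [hsq]; nlinarith [h, hs]
    have := dist_nonneg (x := (1 - ra) • u) (y := (1 - rb) • v)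
    nlinarith [h2]
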